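/- Let p ≥ 3 be an integer, τ > 0, σ₀ > 0, ε > 0, and let β ∈ ℝ^p satisfy ‖β‖₀ = q (i.e., exactly q coordinates of β are nonzero) and β_j² ≤ K for all j, for some constant K > 0. If σ² given β has the inverse-gamma distribution with shape p/2 and scale ‖β‖²/(2τ²), i.e., P(σ² ≥ c | β) = ∫_c^∞ ((‖β‖²/(2τ²))^{p/2} / Γ(p/2)) · u^{−p/2−1} · exp(−‖β‖²/(2τ²u)) du for c > 0, then P(σ²/σ₀² ≥ ε | β) ≤ (q/(p−2)) · (K/τ²) · (1/(ε σ₀²)). -/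

import Mathlib

open MeasureTheory Real

open Set

lemma inv_setup :
    (∀ x ∈ Ioi (0:ℝ), HasDerivWithinAt (fun t : ℝ => t⁻¹) (-(x ^ (2:ℕ))⁻¹) (Ioi 0) x)
    ∧ InjOn (fun t : ℝ => t⁻¹) (Ioi 0)
    ∧ (fun t : ℝ => t⁻¹) '' (Ioi 0) = Ioi 0 := by
  refine ⟨fun x hx => ?_, fun x hx y hy h => ?_, ?_⟩
  · exact (hasDerivAt_inv (ne_of_gt hx)).hasDerivWithinAt
  · simpa using congrArg Inv.inv h
  · ext x
    simp only [mem_image, mem_Ioi]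
    constructor
    · rintro ⟨y, hy, rfl⟩; positivity
    · intro hx; exact ⟨x⁻¹, by positivity, by simp⟩

lemma transform_eq {a b : ℝ} (hb : 0 < b) {x : ℝ} (hx : x ∈ Ioi (0:ℝ)) :
    |(-(x ^ (2:ℕ))⁻¹)| • (x⁻¹ ^ (a - 2) * Real.exp (-(b * x⁻¹)))
      = x ^ (-a) * Real.exp (-(b / x)) := by
  have hx0 : (0:ℝ) < x := hx
  have h1 : x⁻¹ ^ (a - 2) = x ^ (-(a - 2)) := by
    rw [Real.inv_rpow hx0.le, ← Real.rpow_neg hx0.le]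
  have h2 : b * x⁻¹ = b / x := by rw [div_eq_mul_inv]
  rw [abs_neg, abs_inv, abs_of_nonneg (by positivity : (0:ℝ) ≤ x ^ (2:ℕ)),
    smul_eq_mul, h1, h2, ← Real.rpow_natCast x 2, ← Real.rpow_neg hx0.le,
    ← mul_assoc, ← Real.rpow_add hx0]
  norm_num
  rw [show -(2:ℝ) + (2 - a) = -a by ring]

lemma key_integrable {a b : ℝ} (ha : 1 < a) (hb : 0 < b) :
    IntegrableOn (fun u : ℝ => u ^ (-a) * Real.exp (-(b / u))) (Set.Ioi 0) := by
  obtain ⟨hderiv, hinj, himg⟩ := inv_setup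
  have hg : IntegrableOn (fun y : ℝ => y ^ (a - 2) * Real.exp (-(b * y))) (Ioi 0) := by
    have := integrableOn_rpow_mul_exp_neg_mul_rpow (p := 1) (s := a - 2) (b := b)
      (by linarith) one_pos hb
    simpa [Real.rpow_one] using this
  rw [← himg, integrableOn_image_iff_integrableOn_abs_deriv_smul measurableSet_Ioi
    hderiv hinj] at hg
  exact hg.congr_fun (fun x hx => transform_eq hb hx) measurableSet_Ioi

lemma key_int {a b : ℝ} (ha : 1 < a) (hb : 0 < b) :
    ∫ u in Set.Ioi (0:ℝ), u ^ (-a) * Real.exp (-(b / u))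
      = b ^ (1 - a) * Real.Gamma (a - 1) := by
  obtain ⟨hderiv, hinj, himg⟩ := inv_setup
  have h := integral_image_eq_integral_abs_deriv_smul measurableSet_Ioi hderiv hinj
    (fun y : ℝ => y ^ (a - 2) * Real.exp (-(b * y)))
  rw [himg] at h
  have h2 : ∫ u in Set.Ioi (0:ℝ), u ^ (-a) * Real.exp (-(b / u))
      = ∫ y in Ioi (0:ℝ), y ^ (a - 2) * Real.exp (-(b * y)) := by
    rw [h]
    exact (setIntegral_congr_fun measurableSet_Ioi
      (fun x hx => transform_eq (a := a) hb hx)).symm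
  rw [h2]
  have h3 := integral_rpow_mul_exp_neg_mul_Ioi (a := a - 1) (r := b) (by linarith) hb
  rw [show a - 1 - 1 = a - 2 by ring] at h3
  rw [h3, one_div, Real.inv_rpow hb.le, ← Real.rpow_neg hb.le,
    show -(a - 1) = 1 - a by ring]

/-- Proposition 1: the conjugate prior σ²|β ~ IG(p/2, ‖β‖²/(2τ²)) places small mass
on {σ²/σ₀² ≥ ε} when β is sparse and bounded. -/
theorem stmt_0 (p q : ℕ) (hp : 3 ≤ p) (τ σ₀ ε K : ℝ)
    (hτ : 0 < τ) (hσ₀ : 0 < σ₀) (hε : 0 < ε) (hK : 0 < K)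
    (β : Fin p → ℝ)
    (hq : (Finset.univ.filter fun j => β j ≠ 0).card = q)
    (hb : ∀ j, (β j) ^ 2 ≤ K) :
    (∫ u in Set.Ioi (ε * σ₀ ^ 2),
        ((∑ j, (β j) ^ 2) / (2 * τ ^ 2)) ^ ((p : ℝ) / 2) / Real.Gamma ((p : ℝ) / 2) *
          u ^ (-(p : ℝ) / 2 - 1) * Real.exp (-(∑ j, (β j) ^ 2) / (2 * τ ^ 2 * u)))
      ≤ ((q : ℝ) / ((p : ℝ) - 2)) * (K / τ ^ 2) * (1 / (ε * σ₀ ^ 2)) := by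
  set S : ℝ := ∑ j, (β j) ^ 2 with hS_def
  have hc : (0:ℝ) < ε * σ₀ ^ 2 := by positivity
  set c : ℝ := ε * σ₀ ^ 2 with hc_def
  have hS0 : 0 ≤ S := Finset.sum_nonneg fun j _ => sq_nonneg _
  have hp2 : (0:ℝ) < (p:ℝ) - 2 := by
    have : (3:ℝ) ≤ (p:ℝ) := by exact_mod_cast hp
    linarith
  rcases eq_or_lt_of_le hS0 with hS | hS
  · -- all β j = 0, both sides are 0
    have hβ : ∀ j ∈ Finset.univ, (β j) ^ 2 = 0 := by
      intro j _
      have := (Finset.sum_eq_zero_iff_of_nonneg (fun j _ => sq_nonneg (β j))).mp hS.symm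
      exact this j (Finset.mem_univ j)
    have hq0 : q = 0 := by
      rw [← hq, Finset.card_eq_zero, Finset.filter_eq_empty_iff]
      intro j _
      simpa [pow_eq_zero_iff] using hβ j (Finset.mem_univ j)
    have hz : ∀ u ∈ Set.Ioi c,
        S / (2 * τ ^ 2) ^ (1:ℕ) = S / (2 * τ ^ 2) := fun _ _ => by norm_num
    have hintegrand : ∀ u : ℝ,
        (S / (2 * τ ^ 2)) ^ ((p : ℝ) / 2) / Real.Gamma ((p : ℝ) / 2) *
          u ^ (-(p : ℝ) / 2 - 1) * Real.exp (-S / (2 * τ ^ 2 * u)) = 0 := by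
      intro u
      rw [← hS, zero_div, Real.zero_rpow (by positivity : ((p:ℝ)/2) ≠ 0)]
      simp
    rw [hq0]
    calc (∫ u in Set.Ioi c,
        (S / (2 * τ ^ 2)) ^ ((p : ℝ) / 2) / Real.Gamma ((p : ℝ) / 2) *
          u ^ (-(p : ℝ) / 2 - 1) * Real.exp (-S / (2 * τ ^ 2 * u)))
        = 0 := by simp only [hintegrand]; simp
      _ ≤ ((0 : ℕ) : ℝ) / ((p : ℝ) - 2) * (K / τ ^ 2) * (1 / c) := by positivity
  · -- S > 0
    set a : ℝ := (p:ℝ) / 2 with ha_def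
    set b : ℝ := S / (2 * τ ^ 2) with hb_def
    have hb0 : 0 < b := by positivity
    have ha1 : 1 < a := by
      rw [ha_def]
      have : (3:ℝ) ≤ (p:ℝ) := by exact_mod_cast hp
      linarith
    have hΓa : 0 < Real.Gamma a := Real.Gamma_pos_of_pos (by linarith)
    have hΓa1 : 0 < Real.Gamma (a - 1) := Real.Gamma_pos_of_pos (by linarith)
    set C : ℝ := b ^ a / Real.Gamma a with hC_def
    have hC0 : 0 < C := by positivity
    -- the dominating function
    set g : ℝ → ℝ := fun u => C / c * (u ^ (-a) * Real.exp (-(b / u))) with hg_def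
    have hg_int0 : IntegrableOn g (Set.Ioi 0) :=
      (key_integrable ha1 hb0).const_mul _
    have hg_intc : IntegrableOn g (Set.Ioi c) :=
      hg_int0.mono_set (Set.Ioi_subset_Ioi hc.le)
    have hg_nonneg : ∀ u ∈ Set.Ioi (0:ℝ), 0 ≤ g u := by
      intro u hu
      have : (0:ℝ) < u := hu
      rw [hg_def]
      positivity
    -- pointwise bound on Ioi c
    have hpt : ∀ u ∈ Set.Ioi c,
        (S / (2 * τ ^ 2)) ^ ((p : ℝ) / 2) / Real.Gamma ((p : ℝ) / 2) *
          u ^ (-(p : ℝ) / 2 - 1) * Real.exp (-S / (2 * τ ^ 2 * u)) ≤ g u := by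
      intro u hu
      have hu0 : (0:ℝ) < u := lt_trans hc hu
      have hexp : -S / (2 * τ ^ 2 * u) = -(b / u) := by
        rw [hb_def]; field_simp
      have hpow : u ^ (-(p : ℝ) / 2 - 1) = u ^ (-a) * u⁻¹ := by
        rw [show -(p:ℝ)/2 - 1 = (-a) + (-1) by rw [ha_def]; ring,
          Real.rpow_add hu0, Real.rpow_neg_one]
      rw [hexp, hpow]
      have huinv : u⁻¹ ≤ c⁻¹ := by
        apply inv_anti₀ hc (le_of_lt hu)
      have hE : 0 < Real.exp (-(b / u)) := Real.exp_pos _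
      calc C * (u ^ (-a) * u⁻¹) * Real.exp (-(b / u))
          ≤ C * (u ^ (-a) * c⁻¹) * Real.exp (-(b / u)) := by
            apply mul_le_mul_of_nonneg_right _ hE.le
            apply mul_le_mul_of_nonneg_left _ hC0.le
            exact mul_le_mul_of_nonneg_left huinv (Real.rpow_nonneg hu0.le _)
        _ = g u := by rw [hg_def]; ring
    have hnonneg : ∀ u ∈ Set.Ioi c,
        0 ≤ (S / (2 * τ ^ 2)) ^ ((p : ℝ) / 2) / Real.Gamma ((p : ℝ) / 2) *
          u ^ (-(p : ℝ) / 2 - 1) * Real.exp (-S / (2 * τ ^ 2 * u)) := by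
      intro u hu
      have hu0 : (0:ℝ) < u := lt_trans hc hu
      have h1 : (0:ℝ) ≤ (S / (2 * τ ^ 2)) ^ ((p : ℝ) / 2) / Real.Gamma ((p : ℝ) / 2) := by
        positivity
      have h2 : (0:ℝ) ≤ u ^ (-(p : ℝ) / 2 - 1) := Real.rpow_nonneg hu0.le _
      positivity
    -- chain of inequalities
    have step1 : (∫ u in Set.Ioi c,
        (S / (2 * τ ^ 2)) ^ ((p : ℝ) / 2) / Real.Gamma ((p : ℝ) / 2) *
          u ^ (-(p : ℝ) / 2 - 1) * Real.exp (-S / (2 * τ ^ 2 * u)))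
        ≤ ∫ u in Set.Ioi c, g u := by
      refine integral_mono_of_nonneg ?_ hg_intc ?_
      · exact (ae_restrict_iff' measurableSet_Ioi).mpr
          (Filter.Eventually.of_forall hnonneg)
      · exact (ae_restrict_iff' measurableSet_Ioi).mpr
          (Filter.Eventually.of_forall hpt)
    have step2 : (∫ u in Set.Ioi c, g u) ≤ ∫ u in Set.Ioi (0:ℝ), g u := by
      refine setIntegral_mono_set hg_int0 ?_ (HasSubset.Subset.eventuallyLE (Set.Ioi_subset_Ioi hc.le))
      exact (ae_restrict_iff' measurableSet_Ioi).mpr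
          (Filter.Eventually.of_forall hg_nonneg)
    have step3 : (∫ u in Set.Ioi (0:ℝ), g u) = C / c * (b ^ (1 - a) * Real.Gamma (a - 1)) := by
      rw [hg_def, MeasureTheory.integral_const_mul, key_int ha1 hb0]
    have hΓ : Real.Gamma a = (a - 1) * Real.Gamma (a - 1) := by
      calc Real.Gamma a = Real.Gamma (a - 1 + 1) := by norm_num
        _ = (a - 1) * Real.Gamma (a - 1) := Real.Gamma_add_one (by linarith)
    have hbb : b ^ a * b ^ (1 - a) = b := by
      rw [← Real.rpow_add hb0]; norm_num
    have hval : C / c * (b ^ (1 - a) * Real.Gamma (a - 1)) = b / ((a - 1) * c) := by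
      have e1 : C / c * (b ^ (1 - a) * Real.Gamma (a - 1))
          = (b ^ a * b ^ (1 - a)) * (Real.Gamma (a - 1) / Real.Gamma a) / c := by
        rw [hC_def]; ring
      rw [e1, hbb, hΓ]
      have e5 : Real.Gamma (a - 1) / ((a - 1) * Real.Gamma (a - 1)) = 1 / (a - 1) := by
        rw [mul_comm, ← div_div, div_self hΓa1.ne']
      rw [e5, mul_one_div, div_div]
    have hS_le : S ≤ (q : ℝ) * K := by
      have e2 : ∑ j ∈ (Finset.univ.filter fun j => β j ≠ 0), (β j) ^ 2 = S := by
        apply Finset.sum_filter_of_ne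
        intro x _ hx
        exact fun h => hx (by rw [h]; ring)
      calc S = ∑ j ∈ (Finset.univ.filter fun j => β j ≠ 0), (β j) ^ 2 := e2.symm
        _ ≤ (Finset.univ.filter fun j => β j ≠ 0).card • K :=
            Finset.sum_le_card_nsmul _ _ K (fun j _ => hb j)
        _ = (q : ℝ) * K := by rw [hq, nsmul_eq_mul]
    have hfinal : b / ((a - 1) * c) ≤ ((q : ℝ) / ((p : ℝ) - 2)) * (K / τ ^ 2) * (1 / c) := by
      have e3 : b / ((a - 1) * c) = S / (((p:ℝ) - 2) * τ ^ 2 * c) := by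
        rw [hb_def, ha_def]
        have hd1 : (0:ℝ) < ((p:ℝ)/2 - 1) * c := by
          apply mul_pos _ hc; linarith
        have hd2 : (0:ℝ) < ((p:ℝ) - 2) * τ ^ 2 * c :=
          mul_pos (mul_pos hp2 (by positivity)) hc
        rw [div_div, div_eq_div_iff (by positivity : (0:ℝ) < 2 * τ ^ 2 * (((p:ℝ)/2 - 1) * c)).ne' hd2.ne']
        ring
      have e4 : ((q : ℝ) / ((p : ℝ) - 2)) * (K / τ ^ 2) * (1 / c)
          = ((q : ℝ) * K) / (((p:ℝ) - 2) * τ ^ 2 * c) := by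
        rw [div_mul_div_comm, div_mul_div_comm, mul_one]
      rw [e3, e4]
      gcongr
    calc (∫ u in Set.Ioi c,
        (S / (2 * τ ^ 2)) ^ ((p : ℝ) / 2) / Real.Gamma ((p : ℝ) / 2) *
          u ^ (-(p : ℝ) / 2 - 1) * Real.exp (-S / (2 * τ ^ 2 * u)))
        ≤ ∫ u in Set.Ioi c, g u := step1
      _ ≤ ∫ u in Set.Ioi (0:ℝ), g u := step2
      _ = C / c * (b ^ (1 - a) * Real.Gamma (a - 1)) := step3
      _ = b / ((a - 1) * c) := hval
      _ ≤ ((q : ℝ) / ((p : ℝ) - 2)) * (K / τ ^ 2) * (1 / c) := hfinal
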